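/- (One-step variance recursion of the SARAH estimator.) Let h_1,…,h_n : ℝ^D → ℝ be continuously differentiable and H = (1/n)Σ_{j=1}^n h_j. Fix points z, z' ∈ ℝ^D, a vector G' ∈ ℝ^D, and a batch size 1 ≤ b ≤ n. Let B be a random subset of {1,…,n} drawn uniformly from all subsets of size b, and define the random vector G = (1/b) Σ_{j∈B} ( ∇h_j(z) − ∇h_j(z') ) + G'. Then E( ‖G − ∇H(z)‖² ) ≤ ‖G' − ∇H(z')‖² + (1/n) Σ_{j=1}^n ‖∇h_j(z) − ∇h_j(z')‖². In particular, if every ∇h_j is globally M-Lipschitz, then E( ‖G − ∇H(z)‖² ) ≤ ‖G' − ∇H(z')‖² + M² ‖z − z'‖². -/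

import Mathlib

open Finset

lemma count_filter_mem (n b : ℕ) (hb1 : 1 ≤ b) (j : Fin n) :
    ((Finset.powersetCard b (Finset.univ : Finset (Fin n))).filter (fun B => j ∈ B)).card
      = (n-1).choose (b-1) := by
  have : ((Finset.powersetCard b (Finset.univ : Finset (Fin n))).filter (fun B => j ∈ B)).card
      = (Finset.powersetCard (b-1) ((Finset.univ : Finset (Fin n)).erase j)).card := by
    apply Finset.card_nbij' (fun B => B.erase j) (fun A => insert j A)
    · intro B hB
      simp only [Finset.mem_coe, mem_filter, mem_powersetCard] at hB
      simp only [Finset.mem_coe, mem_powersetCard]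
      constructor
      · intro x hx; exact Finset.mem_erase_of_ne_of_mem (Finset.mem_erase.1 hx).1 (Finset.mem_univ _)
      · rw [Finset.card_erase_of_mem hB.2, hB.1.2]
    · intro A hA
      simp only [Finset.mem_coe, mem_powersetCard] at hA
      have hjA : j ∉ A := fun hj => (Finset.mem_erase.1 (hA.1 hj)).1 rfl
      simp only [Finset.mem_coe, mem_filter, mem_powersetCard]
      refine ⟨⟨fun x _ => Finset.mem_univ x, ?_⟩, Finset.mem_insert_self _ _⟩
      rw [Finset.card_insert_of_notMem hjA, hA.2]
      omega
    · intro B hB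
      simp only [Finset.mem_coe, mem_filter] at hB
      exact Finset.insert_erase hB.2
    · intro A hA
      simp only [Finset.mem_coe, mem_powersetCard] at hA
      have hjA : j ∉ A := fun hj => (Finset.mem_erase.1 (hA.1 hj)).1 rfl
      exact Finset.erase_insert hjA
  rw [this, Finset.card_powersetCard, Finset.card_erase_of_mem (Finset.mem_univ j),
    Finset.card_univ, Fintype.card_fin]

lemma sum_powersetCard_sum {F : Type*} [AddCommMonoid F] (n b : ℕ) (hb1 : 1 ≤ b)
    (f : Fin n → F) :
    ∑ B ∈ Finset.powersetCard b (Finset.univ : Finset (Fin n)), ∑ j ∈ B, f j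
      = ((n-1).choose (b-1)) • ∑ j, f j := by
  have h1 : ∀ B ∈ Finset.powersetCard b (Finset.univ : Finset (Fin n)),
      ∑ j ∈ B, f j = ∑ j : Fin n, if j ∈ B then f j else 0 := by
    intro B _
    rw [Finset.sum_ite_mem, Finset.univ_inter]
  rw [Finset.sum_congr rfl h1, Finset.sum_comm]
  rw [Finset.smul_sum]
  refine Finset.sum_congr rfl fun j _ => ?_
  rw [← Finset.sum_filter, Finset.sum_const, count_filter_mem n b hb1 j]

lemma sarah_core {E : Type*} [NormedAddCommGroup E] [InnerProductSpace ℝ E]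
    (n b : ℕ) (hb1 : 1 ≤ b) (hbn : b ≤ n) (v : Fin n → E) (c : E) :
    (1 / (n.choose b) : ℝ) *
        ∑ B ∈ Finset.powersetCard b (Finset.univ : Finset (Fin n)),
          ‖c + ((1/b:ℝ) • ∑ j ∈ B, v j - (1/n:ℝ) • ∑ j, v j)‖ ^ 2
      ≤ ‖c‖ ^ 2 + (1/n : ℝ) * ∑ j, ‖v j‖ ^ 2 := by
  have hn1 : 1 ≤ n := hb1.trans hbn
  have hb0 : (0:ℝ) < b := by exact_mod_cast hb1
  have hn0 : (0:ℝ) < n := by exact_mod_cast hn1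
  set N : ℕ := n.choose b with hN
  have hN0 : (0:ℝ) < N := by exact_mod_cast Nat.choose_pos hbn
  set m : ℕ := (n-1).choose (b-1) with hm
  have hnat : n * m = b * N := by
    obtain ⟨n', rfl⟩ : ∃ n', n = n' + 1 := ⟨n - 1, by omega⟩
    obtain ⟨b', rfl⟩ : ∃ b', b = b' + 1 := ⟨b - 1, by omega⟩
    simp only [hm, hN, Nat.add_sub_cancel]
    have := Nat.add_one_mul_choose_eq n' b'
    rw [this]
    exact mul_comm _ _
  have hcoef : (m:ℝ)/b = (N:ℝ)/n := by
    rw [div_eq_div_iff hb0.ne' hn0.ne']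
    exact_mod_cast (by rw [Nat.mul_comm m n, Nat.mul_comm N b]; exact hnat)
  set vb : E := (1/n:ℝ) • ∑ j, v j with hvb
  set X : Finset (Fin n) → E := fun B => (1/b:ℝ) • ∑ j ∈ B, v j - vb with hX
  set P := Finset.powersetCard b (Finset.univ : Finset (Fin n)) with hP
  have hsumX : ∑ B ∈ P, X B = 0 := by
    have e1 : ∑ B ∈ P, X B = ((m:ℝ)/b - (N:ℝ)/n) • ∑ j, v j := by
      rw [hX]
      simp only [Finset.sum_sub_distrib, Finset.sum_const, ← Finset.smul_sum]
      rw [hP, sum_powersetCard_sum n b hb1 v, Finset.card_powersetCard, Finset.card_univ,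
        Fintype.card_fin, hvb, ← Nat.cast_smul_eq_nsmul ℝ, ← Nat.cast_smul_eq_nsmul ℝ,
        smul_smul, smul_smul, sub_smul]
      module
    rw [e1, hcoef, sub_self, zero_smul]
  have hexp : ∀ B, ‖c + X B‖^2 = ‖c‖^2 + 2 * inner ℝ c (X B) + ‖X B‖^2 := by
    intro B; rw [@norm_add_sq_real]
  have hXbound : ∀ B ∈ P, ‖X B‖^2 ≤ (1/b:ℝ) * ∑ j ∈ B, ‖v j - vb‖^2 := by
    intro B hB
    have hcard : (B.card : ℝ) = b := by
      rw [hP, Finset.mem_powersetCard] at hB; exact_mod_cast hB.2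
    have hXB : X B = (1/b:ℝ) • ∑ j ∈ B, (v j - vb) := by
      rw [hX, Finset.sum_sub_distrib, smul_sub, Finset.sum_const, ← Nat.cast_smul_eq_nsmul ℝ,
        smul_smul, hcard]
      congr 2
      field_simp
      rw [one_smul]
    have h1 : ‖∑ j ∈ B, (v j - vb)‖ ≤ ∑ j ∈ B, ‖v j - vb‖ := norm_sum_le _ _
    have h2 : (∑ j ∈ B, ‖v j - vb‖)^2 ≤ B.card * ∑ j ∈ B, ‖v j - vb‖^2 :=
      sq_sum_le_card_mul_sum_sq
    have h3 : ‖∑ j ∈ B, (v j - vb)‖^2 ≤ (b:ℝ) * ∑ j ∈ B, ‖v j - vb‖^2 := by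
      calc ‖∑ j ∈ B, (v j - vb)‖^2 ≤ (∑ j ∈ B, ‖v j - vb‖)^2 :=
            pow_le_pow_left₀ (norm_nonneg _) h1 2
        _ ≤ (b:ℝ) * ∑ j ∈ B, ‖v j - vb‖^2 := by rw [← hcard]; exact_mod_cast h2
    rw [hXB, norm_smul, mul_pow]
    have hnb : ‖(1/b:ℝ)‖^2 = 1/(b:ℝ)^2 := by
      rw [Real.norm_eq_abs, abs_of_pos (by positivity), div_pow, one_pow]
    rw [hnb, div_mul_eq_mul_div, one_mul, div_le_iff₀ (by positivity : (0:ℝ) < (b:ℝ)^2)]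
    have : (1/b:ℝ) * (∑ j ∈ B, ‖v j - vb‖^2) * (b:ℝ)^2 = (b:ℝ) * ∑ j ∈ B, ‖v j - vb‖^2 := by
      field_simp
    rw [this]; exact h3
  have hscalar : ∑ B ∈ P, (1/b:ℝ) * ∑ j ∈ B, ‖v j - vb‖^2
      = ((N:ℝ)/n) * ∑ j, ‖v j - vb‖^2 := by
    have hc2 : (1/b:ℝ) * m = (N:ℝ)/n := by rw [← hcoef]; ring
    rw [← Finset.mul_sum, hP, sum_powersetCard_sum n b hb1 (fun j => ‖v j - vb‖^2),
      nsmul_eq_mul, ← mul_assoc, hc2]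
  have hvar : ∑ j, ‖v j - vb‖^2 ≤ ∑ j, ‖v j‖^2 := by
    have hsum : ∑ j, v j = (n:ℝ) • vb := by
      rw [hvb, smul_smul, show (n:ℝ) * (1/n) = 1 by field_simp]
      try rw [one_smul]
    have hexp2 : ∀ j, ‖v j - vb‖^2 = ‖v j‖^2 - 2 * inner ℝ (v j) vb + ‖vb‖^2 := by
      intro j; rw [@norm_sub_sq_real]
    have e2 : ∑ j, ‖v j - vb‖^2 = ∑ j, ‖v j‖^2 - (n:ℝ) * ‖vb‖^2 := by
      rw [Finset.sum_congr rfl (fun j _ => hexp2 j), Finset.sum_add_distrib,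
        Finset.sum_sub_distrib, Finset.sum_const, Finset.card_univ, Fintype.card_fin]
      have e3 : ∑ j, (2 * inner ℝ (v j) vb : ℝ) = 2 * ((n:ℝ) * ‖vb‖^2) := by
        rw [← Finset.mul_sum, ← sum_inner, hsum, real_inner_smul_left,
          real_inner_self_eq_norm_sq]
        try ring
      rw [e3]
      try rw [nsmul_eq_mul]
      try ring
    rw [e2]
    nlinarith [sq_nonneg ‖vb‖, hn0]
  have hmain : ∑ B ∈ P, ‖c + X B‖^2 ≤ (N:ℝ) * ‖c‖^2 + ((N:ℝ)/n) * ∑ j, ‖v j - vb‖^2 := by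
    rw [Finset.sum_congr rfl (fun B _ => hexp B), Finset.sum_add_distrib, Finset.sum_add_distrib,
      Finset.sum_const]
    have hc : ∑ B ∈ P, (2 * inner ℝ c (X B) : ℝ) = 0 := by
      rw [← Finset.mul_sum, ← inner_sum, hsumX, inner_zero_right, mul_zero]
    have hsx : ∑ B ∈ P, ‖X B‖^2 ≤ ((N:ℝ)/n) * ∑ j, ‖v j - vb‖^2 := by
      rw [← hscalar]; exact Finset.sum_le_sum hXbound
    have hcard2 : (P.card : ℝ) • ‖c‖^2 = (N:ℝ) * ‖c‖^2 := by
      rw [hP, Finset.card_powersetCard, Finset.card_univ, Fintype.card_fin, smul_eq_mul]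
    rw [hc]
    have hcard3 : P.card • ‖c‖^2 = (N:ℝ) * ‖c‖^2 := by
      rw [← Nat.cast_smul_eq_nsmul ℝ, hcard2]
    rw [hcard3]
    linarith
  calc (1/(N:ℝ)) * ∑ B ∈ P, ‖c + X B‖^2
      ≤ (1/(N:ℝ)) * ((N:ℝ) * ‖c‖^2 + ((N:ℝ)/n) * ∑ j, ‖v j - vb‖^2) :=
        mul_le_mul_of_nonneg_left hmain (by positivity)
    _ = ‖c‖^2 + (1/n:ℝ) * ∑ j, ‖v j - vb‖^2 := by field_simp
    _ ≤ ‖c‖^2 + (1/n:ℝ) * ∑ j, ‖v j‖^2 := by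
        have := mul_le_mul_of_nonneg_left hvar (le_of_lt (by positivity : (0:ℝ) < 1/n))
        linarith


lemma grad_avg (D n : ℕ) (h : Fin n → EuclideanSpace ℝ (Fin D) → ℝ)
    (hC1 : ∀ j, ContDiff ℝ 1 (h j))
    (H : EuclideanSpace ℝ (Fin D) → ℝ)
    (hH : ∀ p, H p = (1 / n : ℝ) * ∑ j, h j p) (x : EuclideanSpace ℝ (Fin D)) :
    gradient H x = (1/n : ℝ) • ∑ j, gradient (h j) x := by
  have hdiff : ∀ j, HasFDerivAt (h j)
      (InnerProductSpace.toDual ℝ _ (gradient (h j) x)) x :=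
    fun j => (((hC1 j).differentiable one_ne_zero).differentiableAt).hasGradientAt.hasFDerivAt
  have hsum : HasFDerivAt (fun p => ∑ j, h j p)
      (∑ j, InnerProductSpace.toDual ℝ _ (gradient (h j) x)) x :=
    HasFDerivAt.fun_sum (fun j _ => hdiff j)
  have hmul := hsum.const_mul (1/n : ℝ)
  have hH' : H = fun p => (1/n : ℝ) * ∑ j, h j p := funext hH
  have hfd : HasFDerivAt H
      ((1/n : ℝ) • ∑ j, InnerProductSpace.toDual ℝ _ (gradient (h j) x)) x := by
    rw [hH']; exact hmul
  have hg : HasGradientAt H ((1/n : ℝ) • ∑ j, gradient (h j) x) x := by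
    rw [hasGradientAt_iff_hasFDerivAt]
    rw [map_smul, map_sum]
    exact hfd
  exact hg.gradient

open Filter Topology

/-- one-step variance recursion of the SARAH estimator. The random batch
`B` is uniformly distributed over the size-`b` subsets of `{1,…,n}`, so expectations are
averages over `Finset.powersetCard b Finset.univ`. -/
theorem sarah_one_step_variance (D n b : ℕ) (hb1 : 1 ≤ b) (hbn : b ≤ n)
    (h : Fin n → EuclideanSpace ℝ (Fin D) → ℝ)
    (hC1 : ∀ j, ContDiff ℝ 1 (h j))
    (H : EuclideanSpace ℝ (Fin D) → ℝ)
    (hH : ∀ p, H p = (1 / n : ℝ) * ∑ j, h j p)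
    (z z' G' : EuclideanSpace ℝ (Fin D))
    (G : Finset (Fin n) → EuclideanSpace ℝ (Fin D))
    (hG : ∀ B, G B =
      (1 / b : ℝ) • (∑ j ∈ B, (gradient (h j) z - gradient (h j) z')) + G') :
    ((1 / (n.choose b) : ℝ) *
        ∑ B ∈ Finset.powersetCard b (Finset.univ : Finset (Fin n)),
          ‖G B - gradient H z‖ ^ 2 ≤
      ‖G' - gradient H z'‖ ^ 2 +
        (1 / n : ℝ) * ∑ j, ‖gradient (h j) z - gradient (h j) z'‖ ^ 2) ∧
    (∀ M : ℝ, (∀ j, LipschitzWith M.toNNReal (gradient (h j))) →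
      (1 / (n.choose b) : ℝ) *
          ∑ B ∈ Finset.powersetCard b (Finset.univ : Finset (Fin n)),
            ‖G B - gradient H z‖ ^ 2 ≤
        ‖G' - gradient H z'‖ ^ 2 + M ^ 2 * ‖z - z'‖ ^ 2) := by
  have hn1 : 1 ≤ n := hb1.trans hbn
  have hn0 : (0:ℝ) < n := by exact_mod_cast hn1
  set v : Fin n → EuclideanSpace ℝ (Fin D) :=
    fun j => gradient (h j) z - gradient (h j) z' with hv
  have hz : gradient H z = (1/n : ℝ) • ∑ j, gradient (h j) z := grad_avg D n h hC1 H hH z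
  have hz' : gradient H z' = (1/n : ℝ) • ∑ j, gradient (h j) z' := grad_avg D n h hC1 H hH z'
  have hGB : ∀ B, G B - gradient H z =
      (G' - gradient H z') + ((1/b:ℝ) • ∑ j ∈ B, v j - (1/n:ℝ) • ∑ j, v j) := by
    intro B
    rw [hG B, hz, hz', hv]
    simp only [Finset.sum_sub_distrib, smul_sub]
    module
  have key : (1 / (n.choose b) : ℝ) *
      ∑ B ∈ Finset.powersetCard b (Finset.univ : Finset (Fin n)),
        ‖G B - gradient H z‖ ^ 2 ≤
      ‖G' - gradient H z'‖ ^ 2 + (1 / n : ℝ) * ∑ j, ‖v j‖ ^ 2 := by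
    have := sarah_core n b hb1 hbn v (G' - gradient H z')
    calc (1 / (n.choose b) : ℝ) *
        ∑ B ∈ Finset.powersetCard b (Finset.univ : Finset (Fin n)),
          ‖G B - gradient H z‖ ^ 2
        = (1 / (n.choose b) : ℝ) *
          ∑ B ∈ Finset.powersetCard b (Finset.univ : Finset (Fin n)),
            ‖(G' - gradient H z') + ((1/b:ℝ) • ∑ j ∈ B, v j - (1/n:ℝ) • ∑ j, v j)‖ ^ 2 := by
          congr 1
          exact Finset.sum_congr rfl fun B _ => by rw [hGB B]
      _ ≤ _ := this
  refine ⟨key, fun M hLip => ?_⟩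
  refine key.trans ?_
  have hbd : ∀ j, ‖v j‖ ^ 2 ≤ M^2 * ‖z - z'‖^2 := by
    intro j
    have h1 : ‖v j‖ ≤ (M.toNNReal : ℝ) * ‖z - z'‖ := by
      have := (hLip j).dist_le_mul z z'
      rwa [dist_eq_norm, dist_eq_norm] at this
    have h2 : ‖v j‖^2 ≤ ((M.toNNReal : ℝ) * ‖z - z'‖)^2 :=
      pow_le_pow_left₀ (norm_nonneg _) h1 2
    have h3 : ((M.toNNReal : ℝ))^2 ≤ M^2 := by
      rw [Real.coe_toNNReal']
      rcases le_or_gt 0 M with hM | hM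
      · rw [max_eq_left hM]
      · rw [max_eq_right hM.le]
        simpa using sq_nonneg M
    nlinarith [sq_nonneg ‖z - z'‖, sq_nonneg ((M.toNNReal : ℝ))]
  have hsum : ∑ j, ‖v j‖ ^ 2 ≤ (n:ℝ) * (M^2 * ‖z - z'‖^2) := by
    calc ∑ j, ‖v j‖ ^ 2 ≤ ∑ _j : Fin n, M^2 * ‖z - z'‖^2 :=
          Finset.sum_le_sum fun j _ => hbd j
      _ = (n:ℝ) * (M^2 * ‖z - z'‖^2) := by
          rw [Finset.sum_const, Finset.card_univ, Fintype.card_fin, nsmul_eq_mul]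
  have : (1/n:ℝ) * ∑ j, ‖v j‖ ^ 2 ≤ M^2 * ‖z - z'‖^2 := by
    have := mul_le_mul_of_nonneg_left hsum (le_of_lt (by positivity : (0:ℝ) < 1/n))
    calc (1/n:ℝ) * ∑ j, ‖v j‖ ^ 2 ≤ (1/n:ℝ) * ((n:ℝ) * (M^2 * ‖z - z'‖^2)) := this
      _ = M^2 * ‖z - z'‖^2 := by field_simp
  linarith
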